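/- Let u ∈ H¹_{rad}(ℝ²) be a radial function and p ≥ 1. Then for every r > 0, |u(r)| ≤ C r^{−1/(p+1)} ‖u‖_{L^{2p}}^{p/(p+1)} ‖∇u‖_{L²}^{1/(p+1)} for some universal constant C (depending only on p). -/

import Mathlib

open MeasureTheory Real Set Metric
open scoped ENNReal NNReal

noncomputable abbrev E2 : Type := EuclideanSpace ℝ (Fin 2)

lemma my_lintegral_radial (G : ℝ → ℝ≥0∞) (hG : Measurable G) :
    ∫⁻ x : E2, G ‖x‖ = (volume : Measure E2).toSphere univ *
      ∫⁻ y in Ioi (0:ℝ), ENNReal.ofReal y * G y := by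
  have hdim : Module.finrank ℝ E2 = 2 := by simp [finrank_euclideanSpace_fin]
  have hGm : Measurable fun z : sphere (0:E2) 1 × Ioi (0:ℝ) => G z.2 :=
    hG.comp (measurable_subtype_coe.comp measurable_snd)
  have h1 : ∫⁻ x : E2, G ‖x‖
      = ∫⁻ x : ({0}ᶜ : Set E2), G ‖x.1‖ ∂((volume : Measure E2).comap (↑)) := by
    rw [lintegral_subtype_comap (μ := (volume : Measure E2))
      (measurableSet_singleton 0).compl (fun a => G ‖a‖),
      MeasureTheory.restrict_compl_singleton]
  have h2 : ∫⁻ x : ({0}ᶜ : Set E2), G ‖x.1‖ ∂((volume : Measure E2).comap (↑))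
      = ∫⁻ z : sphere (0:E2) 1 × Ioi (0:ℝ), G z.2
          ∂((volume : Measure E2).toSphere.prod
            (.volumeIoiPow (Module.finrank ℝ E2 - 1))) := by
    have := ((volume : Measure E2).measurePreserving_homeomorphUnitSphereProd).lintegral_comp
      (f := fun z => G z.2) hGm
    simpa using this
  have h3 : ∫⁻ z : sphere (0:E2) 1 × Ioi (0:ℝ), G z.2
          ∂((volume : Measure E2).toSphere.prod
            (.volumeIoiPow (Module.finrank ℝ E2 - 1)))
      = (volume : Measure E2).toSphere univ * ∫⁻ b : Ioi (0:ℝ), G b.1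
          ∂(Measure.volumeIoiPow (Module.finrank ℝ E2 - 1)) := by
    rw [lintegral_prod _ hGm.aemeasurable]
    simp [lintegral_const, mul_comm]
  have h4 : ∫⁻ b : Ioi (0:ℝ), G b.1 ∂(Measure.volumeIoiPow (Module.finrank ℝ E2 - 1))
      = ∫⁻ y in Ioi (0:ℝ), ENNReal.ofReal y * G y := by
    rw [hdim, Measure.volumeIoiPow, lintegral_withDensity_eq_lintegral_mul _
      (f := fun r : Ioi (0:ℝ) => ENNReal.ofReal (r.1 ^ (2-1)))
      (by exact (measurable_subtype_coe.pow_const _).ennreal_ofReal)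
      (g := fun b : Ioi (0:ℝ) => G b.1) (hG.comp measurable_subtype_coe)]
    simp only [Pi.mul_apply, show (2-1:ℕ)=1 from rfl, pow_one]
    exact lintegral_subtype_comap (μ := (volume : Measure ℝ)) measurableSet_Ioi
      (fun y => ENNReal.ofReal y * G y)
  rw [h1, h2, h3, h4]

lemma my_grad_radial {u : E2 → ℝ} (hu : Differentiable ℝ u)
    (hrad : ∀ x y : E2, ‖x‖ = ‖y‖ → u x = u y) :
    ∀ x y : E2, ‖x‖ = ‖y‖ → ‖fderiv ℝ u x‖ = ‖fderiv ℝ u y‖ := by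
  intro x y hxy
  set R : E2 ≃ₗᵢ[ℝ] E2 := Submodule.reflection (ℝ ∙ (x - y))ᗮ with hR
  have hRx : R x = y := Submodule.reflection_sub hxy
  have hcomp : u ∘ R = u := funext fun z => hrad (R z) z (R.norm_map z)
  have hfd : fderiv ℝ (u ∘ R) x = (fderiv ℝ u (R x)).comp (R : E2 →L[ℝ] E2) := by
    rw [fderiv_comp x (hu (R x)) R.differentiableAt, R.fderiv]
  rw [hcomp] at hfd
  rw [hfd, hRx]
  exact (fderiv ℝ u y).opNorm_comp_linearIsometryEquiv R

/-- transfer: lintegral over the plane of a radial nonneg function vs weighted 1D integral. -/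

lemma my_radial_transfer (n : ℕ) {w : E2 → ℝ} {w0 : ℝ → ℝ} (hw0 : Measurable w0)
    (hrad : ∀ x : E2, |w x| = |w0 ‖x‖|) :
    ∫⁻ x : E2, ENNReal.ofReal (|w x| ^ n) =
      (volume : Measure E2).toSphere univ *
        ∫⁻ y in Ioi (0:ℝ), ENNReal.ofReal (|w0 y| ^ n * y) := by
  have hG : Measurable (fun s => ENNReal.ofReal (|w0 s| ^ n)) :=
    ((hw0.abs).pow_const n).ennreal_ofReal
  have h := my_lintegral_radial (fun s => ENNReal.ofReal (|w0 s| ^ n)) hG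
  have h1 : ∫⁻ x : E2, ENNReal.ofReal (|w x| ^ n)
      = ∫⁻ x : E2, (fun s => ENNReal.ofReal (|w0 s| ^ n)) ‖x‖ := by
    apply lintegral_congr
    intro x
    simp only
    rw [hrad x]
  rw [h1, h]
  congr 1
  apply lintegral_congr
  intro y
  rw [ENNReal.ofReal_mul (by positivity), mul_comm]

lemma my_eLpNorm_pow {α : Type*} [MeasurableSpace α] (μ : Measure α) (n : ℕ) (hn : 0 < n)
    (w : α → ℝ) :
    eLpNorm w (ENNReal.ofReal (n:ℝ)) μ ^ ((n:ℕ):ℝ) = ∫⁻ x, ENNReal.ofReal (|w x| ^ n) ∂μ := by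
  have hn0 : (0:ℝ) < n := by exact_mod_cast hn
  have hq0 : ENNReal.ofReal (n:ℝ) ≠ 0 := ne_of_gt (ENNReal.ofReal_pos.2 hn0)
  have hqt : ENNReal.ofReal (n:ℝ) ≠ ∞ := ENNReal.ofReal_ne_top
  rw [eLpNorm_eq_lintegral_rpow_enorm_toReal hq0 hqt, ENNReal.toReal_ofReal hn0.le,
    ← ENNReal.rpow_mul, one_div, inv_mul_cancel₀ (ne_of_gt hn0), ENNReal.rpow_one]
  apply lintegral_congr
  intro x
  rw [← ofReal_norm, Real.norm_eq_abs,
    ENNReal.ofReal_rpow_of_nonneg (abs_nonneg _) hn0.le, Real.rpow_natCast]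

lemma my_oneD (p : ℕ) (hp : 1 ≤ p) (f f' g : ℝ → ℝ)
    (hder : ∀ s, HasDerivAt f (f' s) s)
    (hgm : Measurable g) (hg0 : ∀ s, 0 ≤ g s)
    (hbound : ∀ s, |f' s| ≤ g s)
    (hA : IntegrableOn (fun y => |f y| ^ (2*p) * y) (Ioi (0:ℝ)))
    (hB : IntegrableOn (fun y => g y ^ 2 * y) (Ioi (0:ℝ)))
    (r : ℝ) (hr : 0 < r) :
    |f r| ^ (p+1) ≤ (p+1) * ((1/r) * ((∫ y in Ioi (0:ℝ), |f y| ^ (2*p) * y) ^ ((1:ℝ)/2)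
      * (∫ y in Ioi (0:ℝ), g y ^ 2 * y) ^ ((1:ℝ)/2))) := by
  have hdf : Differentiable ℝ f := fun s => (hder s).differentiableAt
  have hfc : Continuous f := hdf.continuous
  have hf'm : Measurable f' := by
    have : f' = deriv f := funext fun s => ((hder s).deriv).symm
    rw [this]; exact measurable_deriv f
  set q : ℝ := ((p:ℝ)+1)/2 with hqdef
  have hp1 : (1:ℝ) ≤ (p:ℝ) := by exact_mod_cast hp
  have hq1 : 1 ≤ q := by rw [hqdef, le_div_iff₀ (by norm_num : (0:ℝ) < 2)]; linarith
  have hq0 : 0 ≤ q := by linarith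
  set φ : ℝ → ℝ := fun s => (f s ^ 2) ^ q with hφdef
  set D : ℝ → ℝ := fun s => q * (f s ^ 2) ^ (q - 1) * (2 * f s * f' s) with hDdef
  have hφd : ∀ s, HasDerivAt φ (D s) s := by
    intro s
    have h1 : HasDerivAt (fun t => f t ^ 2) (2 * f s * f' s) s := by
      have := (hder s).fun_pow 2
      simpa [pow_one] using this
    have h2 := (Real.hasDerivAt_rpow_const (x := f s ^ 2) (p := q) (Or.inr hq1)).comp s h1
    simpa [hφdef, hDdef, Function.comp_def, mul_assoc] using h2
  have habs2 : ∀ s, f s ^ 2 = |f s| ^ (2:ℕ) := fun s => (sq_abs _).symm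
  have hφeq : ∀ s, φ s = |f s| ^ (p+1) := by
    intro s
    rw [hφdef]
    simp only
    rw [habs2 s, ← Real.rpow_natCast |f s| 2, ← Real.rpow_mul (abs_nonneg _),
      ← Real.rpow_natCast |f s| (p+1)]
    congr 1
    push_cast
    rw [hqdef]; ring
  -- pointwise bound on D
  have hDb : ∀ s, |D s| ≤ (p+1) * (|f s| ^ p * g s) := by
    intro s
    have hrhs0 : 0 ≤ ((p:ℝ)+1) * (|f s| ^ p * g s) := by
      apply mul_nonneg (by positivity)
      exact mul_nonneg (pow_nonneg (abs_nonneg _) _) (hg0 s)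
    rcases eq_or_ne (f s) 0 with h | h
    · rw [hDdef]
      simp only [h, mul_zero, zero_mul, abs_zero]
      simpa [h] using hrhs0
    · have hfs : 0 < |f s| := abs_pos.2 h
      have hA0 : 0 ≤ (f s ^ 2) ^ (q-1) := Real.rpow_nonneg (sq_nonneg _) _
      have e1 : (f s ^ 2) ^ (q - 1) = |f s| ^ ((p:ℝ) - 1) := by
        rw [habs2 s, ← Real.rpow_natCast |f s| 2, ← Real.rpow_mul (abs_nonneg _)]
        congr 1
        rw [hqdef]; push_cast; ring
      have e2 : |f s| ^ ((p:ℝ) - 1) * |f s| = |f s| ^ p := by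
        nth_rewrite 2 [← Real.rpow_one |f s|]
        rw [← Real.rpow_add hfs, ← Real.rpow_natCast |f s| p]
        norm_num
      have hDabs : |D s| = ((p:ℝ)+1) * ((f s ^ 2) ^ (q-1) * |f s| * |f' s|) := by
        rw [hDdef]
        simp only
        rw [abs_mul, abs_mul, abs_mul, abs_mul]
        rw [abs_of_nonneg hq0, abs_of_nonneg hA0, abs_of_nonneg (by norm_num : (0:ℝ) ≤ 2)]
        rw [hqdef]; ring
      rw [hDabs, e1, e2]
      push_cast
      apply mul_le_mul_of_nonneg_left _ (by positivity)
      exact mul_le_mul_of_nonneg_left (hbound s) (pow_nonneg (abs_nonneg _) _)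
  -- integrability on Ioi r
  have h2p : IntegrableOn (fun y => |f y| ^ (2*p) * y) (Ioi r) := hA.mono_set (Ioi_subset_Ioi hr.le)
  have hBr : IntegrableOn (fun y => g y ^ 2 * y) (Ioi r) := hB.mono_set (Ioi_subset_Ioi hr.le)
  set F : ℝ → ℝ := fun y => |f y| ^ p * Real.sqrt y with hFdef
  set G2 : ℝ → ℝ := fun y => g y * Real.sqrt y with hG2def
  have hFc : Continuous F := ((hfc.abs).pow p).mul Real.continuous_sqrt
  have hG2m : Measurable G2 := hgm.mul Real.continuous_sqrt.measurable
  have hF2eq : ∀ y ∈ Ioi r, F y ^ 2 = |f y| ^ (2*p) * y := by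
    intro y hy
    have hy0 : (0:ℝ) ≤ y := le_of_lt (lt_trans hr hy)
    rw [hFdef]
    simp only
    rw [mul_pow, ← pow_mul, Real.sq_sqrt hy0, mul_comm p 2]
  have hG2eq : ∀ y ∈ Ioi r, G2 y ^ 2 = g y ^ 2 * y := by
    intro y hy
    have hy0 : (0:ℝ) ≤ y := le_of_lt (lt_trans hr hy)
    rw [hG2def]
    simp only
    rw [mul_pow, Real.sq_sqrt hy0]
  have hF2int : Integrable (fun y => F y ^ 2) (volume.restrict (Ioi r)) := by
    refine h2p.congr ?_
    filter_upwards [ae_restrict_mem measurableSet_Ioi] with y hy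
    exact (hF2eq y hy).symm
  have hG2int : Integrable (fun y => G2 y ^ 2) (volume.restrict (Ioi r)) := by
    refine hBr.congr ?_
    filter_upwards [ae_restrict_mem measurableSet_Ioi] with y hy
    exact (hG2eq y hy).symm
  have hFmem : MemLp F 2 (volume.restrict (Ioi r)) :=
    (memLp_two_iff_integrable_sq hFc.aestronglyMeasurable).2 hF2int
  have hGmem : MemLp G2 2 (volume.restrict (Ioi r)) :=
    (memLp_two_iff_integrable_sq hG2m.aestronglyMeasurable).2 hG2int
  have hFG_int : Integrable (fun y => F y * G2 y) (volume.restrict (Ioi r)) := by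
    have hexp : (1:ℝ≥0∞)/1 = 1/2 + 1/2 := by
      rw [ENNReal.div_add_div_same, one_add_one_eq_two, ENNReal.div_self (by norm_num) (by norm_num),
        ENNReal.div_self (by norm_num) (by norm_num)]
    have h := hFmem.smul (φ := G2) (r := 1) hGmem (hpqr := ⟨by rw [ENNReal.inv_two_add_inv_two, inv_one]⟩)
    have h2 : Integrable (G2 • F) (volume.restrict (Ioi r)) := memLp_one_iff_integrable.1 h
    refine h2.congr ?_
    filter_upwards with y
    simp [mul_comm]
  -- Cauchy-Schwarz
  have hCS : ∫ y in Ioi r, F y * G2 y ≤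
      (∫ y in Ioi r, F y ^ 2) ^ ((1:ℝ)/2) * (∫ y in Ioi r, G2 y ^ 2) ^ ((1:ℝ)/2) := by
    have hconj : Real.HolderConjugate 2 2 := Real.holderConjugate_iff.mpr ⟨one_lt_two, by norm_num⟩
    have h := integral_mul_le_Lp_mul_Lq_of_nonneg hconj
      (f := F) (g := G2) (μ := volume.restrict (Ioi r))
      (Filter.Eventually.of_forall fun y => mul_nonneg (pow_nonneg (abs_nonneg _) _) (Real.sqrt_nonneg _))
      (Filter.Eventually.of_forall fun y => mul_nonneg (hg0 y) (Real.sqrt_nonneg _))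
      (by rwa [show ENNReal.ofReal 2 = 2 by norm_num])
      (by rwa [show ENNReal.ofReal 2 = 2 by norm_num])
    have h2 : ∀ x:ℝ, x ^ (2:ℝ) = x ^ (2:ℕ) := fun x => by
      rw [show (2:ℝ) = ((2:ℕ):ℝ) by norm_num, Real.rpow_natCast]
    simp only [h2] at h
    exact h
  -- the product integrand
  have hFGeq : ∀ y ∈ Ioi r, F y * G2 y = |f y| ^ p * g y * y := by
    intro y hy
    have hy0 : (0:ℝ) ≤ y := le_of_lt (lt_trans hr hy)
    rw [hFdef, hG2def]
    simp only
    rw [show |f y| ^ p * Real.sqrt y * (g y * Real.sqrt y)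
        = |f y| ^ p * g y * (Real.sqrt y * Real.sqrt y) by ring, Real.mul_self_sqrt hy0]
  -- integrability of |f|^p * g on Ioi r
  have hh_meas : AEStronglyMeasurable (fun y => |f y| ^ p * g y) (volume.restrict (Ioi r)) :=
    (((hfc.abs.pow p).measurable.mul hgm)).aestronglyMeasurable
  have hh_bound : ∀ᵐ y ∂(volume.restrict (Ioi r)),
      ‖|f y| ^ p * g y‖ ≤ (1/r) * (F y * G2 y) := by
    filter_upwards [ae_restrict_mem measurableSet_Ioi] with y hy
    have hy0 : 0 ≤ |f y| ^ p * g y := mul_nonneg (pow_nonneg (abs_nonneg _) _) (hg0 y)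
    rw [Real.norm_of_nonneg hy0, hFGeq y hy]
    have hry : r ≤ y := le_of_lt hy
    rw [show (1/r) * (|f y| ^ p * g y * y) = (|f y| ^ p * g y) * (y / r) by ring]
    nth_rewrite 1 [← mul_one (|f y| ^ p * g y)]
    apply mul_le_mul_of_nonneg_left _ hy0
    rw [le_div_iff₀ hr, one_mul]
    exact hry
  have h_h_int : IntegrableOn (fun y => |f y| ^ p * g y) (Ioi r) :=
    Integrable.mono' (hFG_int.const_mul (1/r)) hh_meas hh_bound
  have h_h_Ici : IntegrableOn (fun y => |f y| ^ p * g y) (Ici r) :=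
    (integrableOn_Ici_iff_integrableOn_Ioi).2 h_h_int
  -- decay along a sequence
  have hdecay : ∀ ε > 0, ∃ R, r ≤ R ∧ |f R| < ε := by
    intro ε hε
    by_contra hcon
    push_neg at hcon
    have hconst : IntegrableOn (fun _ : ℝ => ε ^ (2*p) * r) (Ioi r) := by
      refine Integrable.mono' h2p aestronglyMeasurable_const ?_
      filter_upwards [ae_restrict_mem measurableSet_Ioi] with y hy
      have h1 : ε ≤ |f y| := hcon y (le_of_lt hy)
      have h2 : ε ^ (2*p) * r ≤ |f y| ^ (2*p) * y :=
        mul_le_mul (pow_le_pow_left₀ hε.le h1 _) (le_of_lt hy) hr.le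
          (pow_nonneg (abs_nonneg _) _)
      rw [Real.norm_of_nonneg (by positivity)]
      exact h2
    rw [integrableOn_const_iff] at hconst
    rcases hconst with h | h
    · rw [enorm_eq_zero] at h
      nlinarith [pow_pos hε (2*p)]
    · rw [Real.volume_Ioi] at h
      exact absurd h (by simp)
  -- FTC bound
  have hFTC : ∀ R, r ≤ R → φ r ≤ φ R + ((p:ℝ)+1) * ∫ y in Ioi r, |f y| ^ p * g y := by
    intro R hR
    have hDmeas : Measurable D := by
      rw [hDdef]
      exact ((measurable_const.mul (((hfc.pow 2).rpow_const
        (fun x => Or.inr (by linarith))).measurable))).mul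
        (((continuous_const.mul hfc).measurable).mul hf'm)
    have hsub : Set.uIoc r R ⊆ Ici r := by
      rw [uIoc_of_le hR]
      exact fun y hy => le_of_lt hy.1
    have hmaj : IntegrableOn (fun y => ((p:ℝ)+1) * (|f y| ^ p * g y)) (uIoc r R) :=
      (h_h_Ici.mono_set hsub).const_mul _
    have hII : IntervalIntegrable D volume r R := by
      rw [intervalIntegrable_iff]
      refine Integrable.mono' hmaj hDmeas.aestronglyMeasurable ?_
      filter_upwards with y
      rw [Real.norm_eq_abs]
      exact hDb y
    have hIImaj : IntervalIntegrable (fun y => ((p:ℝ)+1) * (|f y| ^ p * g y)) volume r R := by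
      rw [intervalIntegrable_iff]
      exact hmaj
    have hFTC0 : ∫ s in r..R, D s = φ R - φ r :=
      intervalIntegral.integral_eq_sub_of_hasDerivAt (fun s _ => hφd s) hII
    have h2 : |∫ s in r..R, D s| ≤ ∫ s in r..R, |D s| :=
      intervalIntegral.abs_integral_le_integral_abs hR
    have h3 : ∫ s in r..R, |D s| ≤ ∫ s in r..R, ((p:ℝ)+1) * (|f s| ^ p * g s) := by
      apply intervalIntegral.integral_mono_on hR hII.abs hIImaj
      exact fun s _ => hDb s
    have h4 : ∫ s in r..R, ((p:ℝ)+1) * (|f s| ^ p * g s)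
        ≤ ((p:ℝ)+1) * ∫ y in Ioi r, |f y| ^ p * g y := by
      rw [intervalIntegral.integral_of_le hR, integral_const_mul]
      apply mul_le_mul_of_nonneg_left _ (by positivity)
      apply setIntegral_mono_set h_h_int
      · filter_upwards [ae_restrict_mem measurableSet_Ioi] with y _
        exact mul_nonneg (pow_nonneg (abs_nonneg _) _) (hg0 y)
      · exact HasSubset.Subset.eventuallyLE Ioc_subset_Ioi_self
    have h5 : φ r = φ R - ∫ s in r..R, D s := by rw [hFTC0]; ring
    have h6 : φ R - ∫ s in r..R, D s ≤ φ R + |∫ s in r..R, D s| := by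
      have := neg_abs_le (∫ s in r..R, D s)
      linarith
    linarith
  -- key bound
  have hI0 : 0 ≤ ∫ y in Ioi r, |f y| ^ p * g y := by
    apply setIntegral_nonneg measurableSet_Ioi
    exact fun y _ => mul_nonneg (pow_nonneg (abs_nonneg _) _) (hg0 y)
  have hKey : φ r ≤ ((p:ℝ)+1) * ∫ y in Ioi r, |f y| ^ p * g y := by
    refine le_of_forall_pos_le_add fun ε hε => ?_
    obtain ⟨R, hRr, hfR⟩ := hdecay (min ε 1) (lt_min hε one_pos)
    have h6 : |f R| ≤ 1 := le_of_lt (lt_of_lt_of_le hfR (min_le_right _ _))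
    have h7 : |f R| < ε := lt_of_lt_of_le hfR (min_le_left _ _)
    have h5 : φ R ≤ ε := by
      rw [hφeq]
      calc |f R| ^ (p+1) ≤ |f R| := pow_le_of_le_one (abs_nonneg _) h6 (Nat.succ_ne_zero p)
        _ ≤ ε := h7.le
    have := hFTC R hRr
    linarith
  -- chain of inequalities
  have hIr1 : ∫ y in Ioi r, |f y| ^ p * g y ≤ (1/r) * ∫ y in Ioi r, F y * G2 y := by
    rw [← integral_const_mul]
    exact integral_mono_ae h_h_int (hFG_int.const_mul (1/r)) (by
      filter_upwards [hh_bound] with y hy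
      calc |f y| ^ p * g y ≤ ‖|f y| ^ p * g y‖ := le_abs_self _
        _ ≤ (1/r) * (F y * G2 y) := hy)
  have hAnn : ∫ y in Ioi r, F y ^ 2 ≤ ∫ y in Ioi (0:ℝ), |f y| ^ (2*p) * y := by
    rw [setIntegral_congr_fun measurableSet_Ioi hF2eq]
    apply setIntegral_mono_set hA
    · filter_upwards [ae_restrict_mem measurableSet_Ioi] with y hy
      exact mul_nonneg (pow_nonneg (abs_nonneg _) _) (le_of_lt hy)
    · exact HasSubset.Subset.eventuallyLE (Ioi_subset_Ioi hr.le)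
  have hBnn : ∫ y in Ioi r, G2 y ^ 2 ≤ ∫ y in Ioi (0:ℝ), g y ^ 2 * y := by
    rw [setIntegral_congr_fun measurableSet_Ioi hG2eq]
    apply setIntegral_mono_set hB
    · filter_upwards [ae_restrict_mem measurableSet_Ioi] with y hy
      exact mul_nonneg (sq_nonneg _) (le_of_lt hy)
    · exact HasSubset.Subset.eventuallyLE (Ioi_subset_Ioi hr.le)
  have hF20 : 0 ≤ ∫ y in Ioi r, F y ^ 2 := integral_nonneg fun y => sq_nonneg _
  have hG20 : 0 ≤ ∫ y in Ioi r, G2 y ^ 2 := integral_nonneg fun y => sq_nonneg _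
  have hrpow : (∫ y in Ioi r, F y ^ 2) ^ ((1:ℝ)/2) * (∫ y in Ioi r, G2 y ^ 2) ^ ((1:ℝ)/2)
      ≤ (∫ y in Ioi (0:ℝ), |f y| ^ (2*p) * y) ^ ((1:ℝ)/2)
        * (∫ y in Ioi (0:ℝ), g y ^ 2 * y) ^ ((1:ℝ)/2) := by
    apply mul_le_mul
    · exact Real.rpow_le_rpow hF20 hAnn (by norm_num)
    · exact Real.rpow_le_rpow hG20 hBnn (by norm_num)
    · exact Real.rpow_nonneg hG20 _
    · exact Real.rpow_nonneg (le_trans hF20 hAnn) _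
  have hFGnn : 0 ≤ ∫ y in Ioi r, F y * G2 y := by
    apply setIntegral_nonneg measurableSet_Ioi
    intro y _
    exact mul_nonneg (mul_nonneg (pow_nonneg (abs_nonneg _) _) (Real.sqrt_nonneg _))
      (mul_nonneg (hg0 y) (Real.sqrt_nonneg _))
  -- conclude
  rw [← hφeq r]
  calc φ r ≤ ((p:ℝ)+1) * ∫ y in Ioi r, |f y| ^ p * g y := hKey
    _ ≤ ((p:ℝ)+1) * ((1/r) * ∫ y in Ioi r, F y * G2 y) := by
        apply mul_le_mul_of_nonneg_left hIr1 (by positivity)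
    _ ≤ ((p:ℝ)+1) * ((1/r) * ((∫ y in Ioi r, F y ^ 2) ^ ((1:ℝ)/2)
          * (∫ y in Ioi r, G2 y ^ 2) ^ ((1:ℝ)/2))) := by
        apply mul_le_mul_of_nonneg_left _ (by positivity)
        apply mul_le_mul_of_nonneg_left hCS (by positivity)
    _ ≤ ((p:ℝ)+1) * ((1/r) * ((∫ y in Ioi (0:ℝ), |f y| ^ (2*p) * y) ^ ((1:ℝ)/2)
          * (∫ y in Ioi (0:ℝ), g y ^ 2 * y) ^ ((1:ℝ)/2))) := by
        apply mul_le_mul_of_nonneg_left _ (by positivity)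
        apply mul_le_mul_of_nonneg_left hrpow (by positivity)
    _ = (p+1) * ((1/r) * ((∫ y in Ioi (0:ℝ), |f y| ^ (2*p) * y) ^ ((1:ℝ)/2)
          * (∫ y in Ioi (0:ℝ), g y ^ 2 * y) ^ ((1:ℝ)/2))) := by push_cast; ring

theorem radial_estimate (p : ℕ) (hp : 1 ≤ p) :
    ∃ C : ℝ, 0 < C ∧
      ∀ u : EuclideanSpace ℝ (Fin 2) → ℝ,
        Differentiable ℝ u →
        (∀ x y : EuclideanSpace ℝ (Fin 2), ‖x‖ = ‖y‖ → u x = u y) →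
        MeasureTheory.MemLp u (ENNReal.ofReal (2 * p))
          (volume : Measure (EuclideanSpace ℝ (Fin 2))) →
        MeasureTheory.MemLp (fun x => ‖fderiv ℝ u x‖) 2
          (volume : Measure (EuclideanSpace ℝ (Fin 2))) →
        ∀ (r : ℝ) (x : EuclideanSpace ℝ (Fin 2)), 0 < r → ‖x‖ = r →
          |u x| ≤ C * r ^ (-(1 : ℝ) / (p + 1)) *
            ((MeasureTheory.eLpNorm u (ENNReal.ofReal (2 * p))
                (volume : Measure (EuclideanSpace ℝ (Fin 2)))).toReal ^ ((p : ℝ) / (p + 1))) *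
            ((MeasureTheory.eLpNorm (fun x => ‖fderiv ℝ u x‖) 2
                (volume : Measure (EuclideanSpace ℝ (Fin 2)))).toReal ^ ((1 : ℝ) / (p + 1))) := by
  have hdim : Module.finrank ℝ E2 = 2 := by simp [finrank_euclideanSpace_fin]
  set K : ℝ≥0∞ := (volume : Measure E2).toSphere univ with hKdef
  have hKval : K = 2 * volume (ball (0:E2) 1) := by
    rw [hKdef, Measure.toSphere_apply_univ, hdim]
    norm_num
  have hK0 : K ≠ 0 := by
    rw [hKval]
    exact mul_ne_zero two_ne_zero (measure_ball_pos _ _ one_pos).ne'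
  have hKtop : K ≠ ∞ := by
    rw [hKval]
    exact ENNReal.mul_ne_top (by norm_num) measure_ball_lt_top.ne
  have hK' : 0 < K.toReal := ENNReal.toReal_pos hK0 hKtop
  have hpR : (1:ℝ) ≤ (p:ℝ) := by exact_mod_cast hp
  have hp1ne : ((p:ℝ)+1) ≠ 0 := by positivity
  refine ⟨(((p:ℝ)+1)/K.toReal) ^ ((1:ℝ)/((p:ℝ)+1)), Real.rpow_pos_of_pos (by positivity) _, ?_⟩
  intro u hu hrad hu1 hu2 r x hr hxr
  -- radial profile
  set e : E2 := EuclideanSpace.single (0 : Fin 2) (1:ℝ) with hedef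
  have he : ‖e‖ = 1 := by rw [hedef, EuclideanSpace.norm_single]; norm_num
  set f : ℝ → ℝ := fun s => u (s • e) with hfdef
  set g : ℝ → ℝ := fun s => ‖fderiv ℝ u (s • e)‖ with hgdef
  have hnorm : ∀ s : ℝ, 0 ≤ s → ‖s • e‖ = s := fun s hs => by
    rw [norm_smul, he, mul_one, Real.norm_eq_abs, abs_of_nonneg hs]
  have hux : ∀ z : E2, u z = f ‖z‖ := fun z =>
    hrad z (‖z‖ • e) (by rw [hnorm _ (norm_nonneg z)])
  have hgx : ∀ z : E2, ‖fderiv ℝ u z‖ = g ‖z‖ := fun z =>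
    my_grad_radial hu hrad z (‖z‖ • e) (by rw [hnorm _ (norm_nonneg z)])
  have hsmul : ∀ s:ℝ, HasDerivAt (fun t : ℝ => t • e) e s := fun s => by
    simpa using (hasDerivAt_id s).smul_const e
  have hder : ∀ s, HasDerivAt f ((fderiv ℝ u (s • e)) e) s := fun s =>
    ((hu (s • e)).hasFDerivAt.comp_hasDerivAt s (hsmul s))
  have hg0 : ∀ s, 0 ≤ g s := fun s => norm_nonneg _
  have hgm : Measurable g := by
    apply Measurable.norm
    exact (measurable_fderiv ℝ u).comp (measurable_id.smul_const e)
  have hbound : ∀ s, |(fderiv ℝ u (s • e)) e| ≤ g s := fun s => by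
    rw [hgdef]
    calc |(fderiv ℝ u (s • e)) e| = ‖(fderiv ℝ u (s • e)) e‖ := (Real.norm_eq_abs _).symm
      _ ≤ ‖fderiv ℝ u (s • e)‖ * ‖e‖ := ContinuousLinearMap.le_opNorm _ _
      _ = ‖fderiv ℝ u (s • e)‖ := by rw [he, mul_one]
  have hfm : Measurable f :=
    (hu.continuous.comp (continuous_id.smul continuous_const)).measurable
  -- exponent bookkeeping
  have hq1 : ENNReal.ofReal (2 * (p:ℝ)) = ENNReal.ofReal (((2*p : ℕ)):ℝ) := by
    congr 1; push_cast; ring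
  set N1 : ℝ := (eLpNorm u (ENNReal.ofReal (2 * (p:ℝ))) volume).toReal with hN1def
  set N2 : ℝ := (eLpNorm (fun z : E2 => ‖fderiv ℝ u z‖) 2 volume).toReal with hN2def
  have hN1nn : 0 ≤ N1 := ENNReal.toReal_nonneg
  have hN2nn : 0 ≤ N2 := ENNReal.toReal_nonneg
  -- L^{2p} transfer
  set I1 : ℝ≥0∞ := ∫⁻ y in Ioi (0:ℝ), ENNReal.ofReal (|f y| ^ (2*p) * y) with hI1def
  have htr1 : ∫⁻ z : E2, ENNReal.ofReal (|u z| ^ (2*p)) = K * I1 :=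
    my_radial_transfer (2*p) hfm (fun z => by rw [hux z])
  have hel1 : eLpNorm u (ENNReal.ofReal (2 * (p:ℝ))) volume ^ (((2*p : ℕ)):ℝ)
      = K * I1 := by
    rw [hq1, my_eLpNorm_pow volume (2*p) (by positivity) u]
    exact htr1
  have hN1top : eLpNorm u (ENNReal.ofReal (2 * (p:ℝ))) volume ≠ ∞ := hu1.2.ne
  have hI1top : I1 ≠ ∞ := by
    intro hcon
    rw [hcon, ENNReal.mul_top hK0] at hel1
    exact (ENNReal.rpow_lt_top_of_nonneg (by positivity) hN1top).ne hel1
  have hAval : K.toReal * I1.toReal = N1 ^ (2*p) := by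
    have := congrArg ENNReal.toReal hel1
    rw [ENNReal.toReal_mul] at this
    rw [← this, ← ENNReal.toReal_rpow, Real.rpow_natCast]
  -- L^2 gradient transfer
  set I2 : ℝ≥0∞ := ∫⁻ y in Ioi (0:ℝ), ENNReal.ofReal (|g y| ^ 2 * y) with hI2def
  have htr2 : ∫⁻ z : E2, ENNReal.ofReal (|‖fderiv ℝ u z‖| ^ 2) = K * I2 :=
    my_radial_transfer 2 hgm (fun z => by rw [abs_norm, hgx z, abs_of_nonneg (hg0 _)])
  have h2eq : ENNReal.ofReal (((2:ℕ)):ℝ) = (2 : ℝ≥0∞) := by norm_num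
  have hel2 : eLpNorm (fun z : E2 => ‖fderiv ℝ u z‖) 2 volume ^ (((2 : ℕ)):ℝ) = K * I2 := by
    have key := my_eLpNorm_pow (volume : Measure E2) 2 (by norm_num)
      (fun z : E2 => ‖fderiv ℝ u z‖)
    rw [h2eq] at key
    rw [key]
    exact htr2
  have hN2top : eLpNorm (fun z : E2 => ‖fderiv ℝ u z‖) 2 volume ≠ ∞ := hu2.2.ne
  have hI2top : I2 ≠ ∞ := by
    intro hcon
    rw [hcon, ENNReal.mul_top hK0] at hel2
    exact (ENNReal.rpow_lt_top_of_nonneg (by positivity) hN2top).ne hel2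
  have hBval : K.toReal * I2.toReal = N2 ^ 2 := by
    have := congrArg ENNReal.toReal hel2
    rw [ENNReal.toReal_mul] at this
    rw [← this, ← ENNReal.toReal_rpow, Real.rpow_natCast]
  -- integrability on the half-line
  have hAint : IntegrableOn (fun y => |f y| ^ (2*p) * y) (Ioi (0:ℝ)) := by
    constructor
    · exact ((hfm.abs.pow_const _).mul measurable_id).aestronglyMeasurable
    · rw [hasFiniteIntegral_iff_ofReal ?_]
      · exact Ne.lt_top hI1top
      · filter_upwards [ae_restrict_mem measurableSet_Ioi] with y hy
        exact mul_nonneg (by positivity) (le_of_lt hy)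
  have hBint : IntegrableOn (fun y => g y ^ 2 * y) (Ioi (0:ℝ)) := by
    constructor
    · exact ((hgm.pow_const _).mul measurable_id).aestronglyMeasurable
    · rw [hasFiniteIntegral_iff_ofReal ?_]
      · have h : ∀ y, g y ^ 2 = |g y| ^ 2 := fun y => (sq_abs _).symm
        simp_rw [h]
        exact Ne.lt_top hI2top
      · filter_upwards [ae_restrict_mem measurableSet_Ioi] with y hy
        exact mul_nonneg (sq_nonneg _) (le_of_lt hy)
  -- values of the integrals
  have hAeq : ∫ y in Ioi (0:ℝ), |f y| ^ (2*p) * y = I1.toReal := by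
    rw [integral_eq_lintegral_of_nonneg_ae ?_ hAint.1]
    · filter_upwards [ae_restrict_mem measurableSet_Ioi] with y hy
      exact mul_nonneg (by positivity) (le_of_lt hy)
  have hBeq : ∫ y in Ioi (0:ℝ), g y ^ 2 * y = I2.toReal := by
    rw [hI2def]
    rw [integral_eq_lintegral_of_nonneg_ae ?_ hBint.1]
    · congr 1
      apply lintegral_congr
      intro y
      rw [sq_abs]
    · filter_upwards [ae_restrict_mem measurableSet_Ioi] with y hy
      exact mul_nonneg (sq_nonneg _) (le_of_lt hy)
  -- apply the 1D estimate
  have hmain := my_oneD p hp f _ g hder hgm hg0 hbound hAint hBint r hr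
  rw [hAeq, hBeq] at hmain
  -- final algebra
  have hfr : |u x| = |f r| := by rw [hux x, hxr]
  set A := I1.toReal with hAdef
  set B := I2.toReal with hBdef
  have hAnn : 0 ≤ A := ENNReal.toReal_nonneg
  have hBnn : 0 ≤ B := ENNReal.toReal_nonneg
  have hAv : A = N1 ^ (2*p) / K.toReal := by
    rw [eq_div_iff (ne_of_gt hK')]
    linarith [hAval]
  have hBv : B = N2 ^ 2 / K.toReal := by
    rw [eq_div_iff (ne_of_gt hK')]
    linarith [hBval]
  have hsqrtK : K.toReal ^ ((1:ℝ)/2) * K.toReal ^ ((1:ℝ)/2) = K.toReal := by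
    rw [← Real.rpow_add hK']
    norm_num
  have hAB : A ^ ((1:ℝ)/2) * B ^ ((1:ℝ)/2) = N1 ^ p * N2 / K.toReal := by
    rw [hAv, hBv, Real.div_rpow (by positivity) hK'.le, Real.div_rpow (sq_nonneg _) hK'.le]
    rw [← Real.rpow_natCast N1 (2*p), ← Real.rpow_mul hN1nn,
      ← Real.rpow_natCast N2 2, ← Real.rpow_mul hN2nn]
    rw [show ((2*p : ℕ):ℝ) * ((1:ℝ)/2) = ((p:ℕ):ℝ) by push_cast; ring,
      show ((2:ℕ):ℝ) * ((1:ℝ)/2) = 1 by norm_num]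
    rw [Real.rpow_natCast, Real.rpow_one]
    rw [div_mul_div_comm, hsqrtK]
  set RHS := (((p:ℝ)+1)/K.toReal) ^ ((1:ℝ)/((p:ℝ)+1)) * r ^ (-(1:ℝ)/((p:ℝ)+1))
    * N1 ^ ((p:ℝ)/((p:ℝ)+1)) * N2 ^ ((1:ℝ)/((p:ℝ)+1)) with hRHSdef
  have hRHSnn : 0 ≤ RHS := by
    rw [hRHSdef]
    have h1 : (0:ℝ) ≤ (((p:ℝ)+1)/K.toReal) ^ ((1:ℝ)/((p:ℝ)+1)) := Real.rpow_nonneg (by positivity) _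
    have h2 : (0:ℝ) ≤ r ^ (-(1:ℝ)/((p:ℝ)+1)) := Real.rpow_nonneg hr.le _
    have h3 : (0:ℝ) ≤ N1 ^ ((p:ℝ)/((p:ℝ)+1)) := Real.rpow_nonneg hN1nn _
    have h4 : (0:ℝ) ≤ N2 ^ ((1:ℝ)/((p:ℝ)+1)) := Real.rpow_nonneg hN2nn _
    positivity
  have hRHSpow : RHS ^ (p+1) = (((p:ℝ)+1)/K.toReal) * (1/r) * (N1 ^ p * N2) := by
    rw [hRHSdef, mul_pow, mul_pow, mul_pow]
    rw [← Real.rpow_natCast ((((p:ℝ)+1)/K.toReal) ^ ((1:ℝ)/((p:ℝ)+1))) (p+1),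
      ← Real.rpow_mul (by positivity),
      ← Real.rpow_natCast (r ^ (-(1:ℝ)/((p:ℝ)+1))) (p+1), ← Real.rpow_mul hr.le,
      ← Real.rpow_natCast (N1 ^ ((p:ℝ)/((p:ℝ)+1))) (p+1), ← Real.rpow_mul hN1nn,
      ← Real.rpow_natCast (N2 ^ ((1:ℝ)/((p:ℝ)+1))) (p+1), ← Real.rpow_mul hN2nn]
    rw [show ((1:ℝ)/((p:ℝ)+1)) * ((p+1 : ℕ):ℝ) = 1 by push_cast; field_simp,
      show (-(1:ℝ)/((p:ℝ)+1)) * ((p+1 : ℕ):ℝ) = -1 by push_cast; field_simp,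
      show (((p:ℝ))/((p:ℝ)+1)) * ((p+1 : ℕ):ℝ) = ((p:ℕ):ℝ) by push_cast; field_simp]
    simp only [Real.rpow_one, Real.rpow_natCast, Real.rpow_neg_one]
    ring
  have hfinal : |f r| ^ (p+1) ≤ RHS ^ (p+1) := by
    rw [hRHSpow]
    calc |f r| ^ (p+1)
        ≤ ((p:ℝ)+1) * ((1/r) * (A ^ ((1:ℝ)/2) * B ^ ((1:ℝ)/2))) := by
          exact_mod_cast hmain
      _ = (((p:ℝ)+1)/K.toReal) * (1/r) * (N1 ^ p * N2) := by
          rw [hAB]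
          ring
  rw [hfr]
  calc |f r| ≤ RHS := le_of_pow_le_pow_left₀ (Nat.succ_ne_zero p) hRHSnn hfinal
    _ = _ := by rw [hRHSdef, hN1def, hN2def]
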